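/- Let Θ : ℝ^{2N} → ℝ^N be the C¹ map assigning to (x,p) the unique solution θ of p_i = θ_i + Σ_{j≠i} ψ_x(x_i−x_j, θ_i−θ_j), and define the Hamiltonian H(x,p) = (1/2) Σ_{i=1}^N Θ_i(x,p)². Fix (y,θ) ∈ ℝ^{2N} and let (x(t), p(t)) = ω(y + tθ, θ) be the trajectory of the semiclassical Bethe system, where ω solves y_i + tθ_i = x_i(t) + Σ_{j≠i} ψ_θ(x_i(t)−x_j(t), θ_i−θ_j) and p_i(t) = θ_i + Σ_{j≠i} ψ_x(x_i(t)−x_j(t), θ_i−θ_j). Then H is continuously differentiable and the trajectory satisfies Hamilton's equations: dx_i/dt = ∂H/∂p_i(x(t),p(t)) and dp_i/dt = −∂H/∂x_i(x(t),p(t)) for all t ∈ ℝ and i = 1,…,N. -/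

import Mathlib

open Finset


private lemma swapSum {N : ℕ} (F : Fin N → Fin N → ℝ) :
    ∑ i, ∑ j ∈ Finset.univ.erase i, F i j = ∑ i, ∑ j ∈ Finset.univ.erase i, F j i := by
  rw [Finset.sum_comm' (t' := Finset.univ) (s' := fun j => Finset.univ.erase j)]
  intro i j
  simp [ne_comm, eq_comm]

private lemma antiSum_zero {N : ℕ} (F : Fin N → Fin N → ℝ) (h : ∀ i j, F i j = - F j i) :
    ∑ i, ∑ j ∈ Finset.univ.erase i, F i j = 0 := by
  have h1 := swapSum F
  have h2 : ∑ i, ∑ j ∈ Finset.univ.erase i, F j i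
      = - ∑ i, ∑ j ∈ Finset.univ.erase i, F i j := by
    rw [← Finset.sum_neg_distrib]
    refine Finset.sum_congr rfl fun i _ => ?_
    rw [← Finset.sum_neg_distrib]
    exact Finset.sum_congr rfl fun j _ => by rw [h j i]
  linarith [h1, h2.symm ▸ h1]

/-- the "interaction" bilinear-ish map -/
private def Smap {N : ℕ} (k : Fin N → Fin N → ℝ) (w : Fin N → ℝ) (i : Fin N) : ℝ :=
  ∑ j ∈ Finset.univ.erase i, k i j * (w i - w j)

private lemma Smap_symm {N : ℕ} (k : Fin N → Fin N → ℝ) (hk : ∀ i j, k i j = k j i)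
    (v w : Fin N → ℝ) : ∑ i, v i * Smap k w i = ∑ i, w i * Smap k v i := by
  have key : ∑ i, (v i * Smap k w i - w i * Smap k v i) = 0 := by
    have : ∀ i, v i * Smap k w i - w i * Smap k v i
        = ∑ j ∈ Finset.univ.erase i, k i j * (w i * v j - v i * w j) := by
      intro i
      simp only [Smap, Finset.mul_sum, ← Finset.sum_sub_distrib]
      exact Finset.sum_congr rfl fun j _ => by ring
    rw [Finset.sum_congr rfl fun i _ => this i]
    exact antiSum_zero _ fun i j => by rw [hk i j]; ring
  have := Finset.sum_sub_distrib (s := (Finset.univ : Finset (Fin N)))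
    (f := fun i => v i * Smap k w i) (g := fun i => w i * Smap k v i)
  linarith [key, this ▸ key]

private lemma Smap_nonneg {N : ℕ} (k : Fin N → Fin N → ℝ) (hk : ∀ i j, k i j = k j i)
    (hk0 : ∀ i j, 0 ≤ k i j) (w : Fin N → ℝ) : 0 ≤ ∑ i, w i * Smap k w i := by
  have h2 : 2 * ∑ i, w i * Smap k w i
      = ∑ i, ∑ j ∈ Finset.univ.erase i, k i j * (w i - w j) ^ 2 := by
    have e1 : ∑ i, w i * Smap k w i
        = ∑ i, ∑ j ∈ Finset.univ.erase i, k i j * (w i * (w i - w j)) := by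
      refine Finset.sum_congr rfl fun i _ => ?_
      simp only [Smap, Finset.mul_sum]
      exact Finset.sum_congr rfl fun j _ => by ring
    have e2 : ∑ i, ∑ j ∈ Finset.univ.erase i, k i j * (w i * (w i - w j))
        = ∑ i, ∑ j ∈ Finset.univ.erase i, k i j * (- (w j * (w i - w j))) := by
      nth_rewrite 1 [swapSum (fun i j => k i j * (w i * (w i - w j)))]
      refine Finset.sum_congr rfl fun i _ => Finset.sum_congr rfl fun j _ => ?_
      rw [hk i j]; ring
    rw [e1, two_mul]
    nth_rewrite 2 [e2]
    rw [← Finset.sum_add_distrib]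
    refine Finset.sum_congr rfl fun i _ => ?_
    rw [← Finset.sum_add_distrib]
    exact Finset.sum_congr rfl fun j _ => by ring
  nlinarith [Finset.sum_nonneg (fun i (_ : i ∈ (Finset.univ : Finset (Fin N))) =>
    Finset.sum_nonneg (fun j (_ : j ∈ Finset.univ.erase i) =>
      mul_nonneg (hk0 i j) (sq_nonneg (w i - w j))))]

private lemma uniq_sol {N : ℕ} (φ : ℝ → ℝ → ℝ)
    (hodd : ∀ a b, φ (-a) (-b) = - φ a b)
    (hmono : ∀ a, Monotone (φ a)) (c v w : Fin N → ℝ)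
    (h : ∀ i, v i + ∑ j ∈ Finset.univ.erase i, φ (c i - c j) (v i - v j)
           = w i + ∑ j ∈ Finset.univ.erase i, φ (c i - c j) (w i - w j)) : v = w := by
  set Δ := fun i j => φ (c i - c j) (v i - v j) - φ (c i - c j) (w i - w j) with hΔ
  set d := fun i => v i - w i with hd
  have key : ∀ i, d i = - ∑ j ∈ Finset.univ.erase i, Δ i j := by
    intro i
    have h2 : ∑ j ∈ Finset.univ.erase i, Δ i j
        = (∑ j ∈ Finset.univ.erase i, φ (c i - c j) (v i - v j))
          - ∑ j ∈ Finset.univ.erase i, φ (c i - c j) (w i - w j) :=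
      Finset.sum_sub_distrib _ _
    have := h i
    simp only [hd, h2]
    linarith
  have hΔanti : ∀ i j, Δ i j = - Δ j i := by
    intro i j
    simp only [hΔ]
    rw [show c j - c i = -(c i - c j) by ring, show v j - v i = -(v i - v j) by ring,
      show w j - w i = -(w i - w j) by ring, hodd, hodd]
    ring
  have hS : 0 ≤ ∑ i, ∑ j ∈ Finset.univ.erase i, d i * Δ i j := by
    have h2S : 2 * ∑ i, ∑ j ∈ Finset.univ.erase i, d i * Δ i j
        = ∑ i, ∑ j ∈ Finset.univ.erase i, (d i - d j) * Δ i j := by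
      have e2 : ∑ i, ∑ j ∈ Finset.univ.erase i, d i * Δ i j
          = ∑ i, ∑ j ∈ Finset.univ.erase i, - (d j * Δ i j) := by
        nth_rewrite 1 [swapSum (fun i j => d i * Δ i j)]
        refine Finset.sum_congr rfl fun i _ => Finset.sum_congr rfl fun j _ => ?_
        rw [hΔanti i j]; ring
      rw [two_mul]
      nth_rewrite 2 [e2]
      rw [← Finset.sum_add_distrib]
      refine Finset.sum_congr rfl fun i _ => ?_
      rw [← Finset.sum_add_distrib]
      exact Finset.sum_congr rfl fun j _ => by ring
    have : 0 ≤ ∑ i, ∑ j ∈ Finset.univ.erase i, (d i - d j) * Δ i j := by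
      refine Finset.sum_nonneg fun i _ => Finset.sum_nonneg fun j _ => ?_
      have hdd : d i - d j = (v i - v j) - (w i - w j) := by simp only [hd]; ring
      rcases le_total (w i - w j) (v i - v j) with hle | hle
      · have h1 : 0 ≤ Δ i j := by
          simp only [hΔ, sub_nonneg]; exact hmono _ hle
        have h2 : 0 ≤ d i - d j := by rw [hdd]; linarith
        positivity
      · have h1 : Δ i j ≤ 0 := by
          simp only [hΔ, sub_nonpos]; exact hmono _ hle
        have h2 : d i - d j ≤ 0 := by rw [hdd]; linarith
        nlinarith [mul_nonneg (neg_nonneg.mpr h2) (neg_nonneg.mpr h1)]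
    linarith
  have hsq : ∑ i, d i ^ 2 = - ∑ i, ∑ j ∈ Finset.univ.erase i, d i * Δ i j := by
    rw [← Finset.sum_neg_distrib]
    refine Finset.sum_congr rfl fun i _ => ?_
    rw [← Finset.mul_sum, sq]
    nth_rewrite 2 [key i]
    ring
  have hzero : ∑ i, d i ^ 2 = 0 := by
    have h1 : 0 ≤ ∑ i, d i ^ 2 := Finset.sum_nonneg fun i _ => sq_nonneg _
    linarith
  funext i
  have := (Finset.sum_eq_zero_iff_of_nonneg
    (fun i (_ : i ∈ (Finset.univ : Finset (Fin N))) => sq_nonneg (d i))).mp hzero i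
    (Finset.mem_univ i)
  have : d i = 0 := by nlinarith [this]
  simpa [hd, sub_eq_zero] using this

private lemma psi_package (ψ ψx ψθ ψxθ : ℝ → ℝ → ℝ)
    (hC2 : ContDiff ℝ 2 (fun q : ℝ × ℝ => ψ q.1 q.2))
    (hψx : ∀ x t, HasDerivAt (fun x' => ψ x' t) (ψx x t) x)
    (hψθ : ∀ x t, HasDerivAt (fun t' => ψ x t') (ψθ x t) t)
    (hψxθ : ∀ x t, HasDerivAt (fun t' => ψx x t') (ψxθ x t) t) :
    ∃ ψxx : ℝ → ℝ → ℝ,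
      (∀ x t, HasDerivAt (fun x' => ψx x' t) (ψxx x t) x) ∧
      (∀ x t, HasDerivAt (fun x' => ψθ x' t) (ψxθ x t) x) ∧
      ContDiff ℝ 1 (fun q : ℝ × ℝ => ψθ q.1 q.2) ∧
      (∀ p : ℝ × ℝ, ∃ L : ℝ × ℝ →L[ℝ] ℝ, HasFDerivAt (fun q : ℝ × ℝ => ψx q.1 q.2) L p ∧
        ∀ a b : ℝ, L (a, b) = ψxx p.1 p.2 * a + ψxθ p.1 p.2 * b) := by
  set f : ℝ × ℝ → ℝ := fun q => ψ q.1 q.2 with hf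
  have hfd : Differentiable ℝ f := hC2.differentiable (by norm_num)
  have hf'C1 : ContDiff ℝ 1 (fderiv ℝ f) := hC2.fderiv_right (by norm_num)
  have hf'd : Differentiable ℝ (fderiv ℝ f) := hf'C1.differentiable (by norm_num)
  set D2 : ℝ × ℝ → (ℝ × ℝ) →L[ℝ] (ℝ × ℝ) →L[ℝ] ℝ := fun p => fderiv ℝ (fderiv ℝ f) p with hD2def
  have hD2 : ∀ p, HasFDerivAt (fderiv ℝ f) (D2 p) p := fun p => (hf'd p).hasFDerivAt
  have hsymm2 : ∀ (p v w : ℝ × ℝ), D2 p v w = D2 p w v := fun p =>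
    second_derivative_symmetric (fun y => (hfd y).hasFDerivAt) (hD2 p)
  -- lines
  have lineX : ∀ (F : ℝ × ℝ → ℝ) (L : ℝ × ℝ →L[ℝ] ℝ) (x t : ℝ), HasFDerivAt F L (x, t) →
      HasDerivAt (fun s => F (s, t)) (L (1, 0)) x := by
    intro F L x t hF
    have hline : HasDerivAt (fun s : ℝ => (s, t)) ((1 : ℝ), (0 : ℝ)) x := by
      simpa using (hasDerivAt_id x).prodMk (hasDerivAt_const x t)
    exact hF.comp_hasDerivAt x hline
  have lineT : ∀ (F : ℝ × ℝ → ℝ) (L : ℝ × ℝ →L[ℝ] ℝ) (x t : ℝ), HasFDerivAt F L (x, t) →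
      HasDerivAt (fun s => F (x, s)) (L (0, 1)) t := by
    intro F L x t hF
    have hline : HasDerivAt (fun s : ℝ => (x, s)) ((0 : ℝ), (1 : ℝ)) t := by
      simpa using (hasDerivAt_const t x).prodMk (hasDerivAt_id t)
    exact hF.comp_hasDerivAt t hline
  have hpsix_eq : ∀ x t, ψx x t = fderiv ℝ f (x, t) (1, 0) := fun x t =>
    (hψx x t).unique (lineX f (fderiv ℝ f (x, t)) x t (hfd (x, t)).hasFDerivAt)
  have hpsiθ_eq : ∀ x t, ψθ x t = fderiv ℝ f (x, t) (0, 1) := fun x t =>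
    (hψθ x t).unique (lineT f (fderiv ℝ f (x, t)) x t (hfd (x, t)).hasFDerivAt)
  -- g = ψx jointly
  have hgx : (fun q : ℝ × ℝ => fderiv ℝ f q (1, 0)) = fun q : ℝ × ℝ => ψx q.1 q.2 :=
    funext fun q => (hpsix_eq q.1 q.2).symm
  have hgθ : (fun q : ℝ × ℝ => fderiv ℝ f q (0, 1)) = fun q : ℝ × ℝ => ψθ q.1 q.2 :=
    funext fun q => (hpsiθ_eq q.1 q.2).symm
  have hg' : ∀ (v : ℝ × ℝ) (p : ℝ × ℝ), HasFDerivAt (fun q : ℝ × ℝ => fderiv ℝ f q v)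
      ((ContinuousLinearMap.apply ℝ ℝ v).comp (D2 p)) p := fun v p =>
    (ContinuousLinearMap.apply ℝ ℝ v).hasFDerivAt.comp p (hD2 p)
  -- identification of ψxθ
  have hxθ_eq : ∀ x t, ψxθ x t = D2 (x, t) (0, 1) (1, 0) := by
    intro x t
    have h1 := lineT _ _ x t (hg' (1, 0) (x, t))
    have heq : (fun s => fderiv ℝ f (x, s) (1, 0)) = fun s => ψx x s :=
      funext fun s => (hpsix_eq x s).symm
    rw [heq] at h1
    exact (hψxθ x t).unique h1
  refine ⟨fun x t => D2 (x, t) (1, 0) (1, 0), ?_, ?_, ?_, ?_⟩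
  · intro x t
    have h1 := lineX _ _ x t (hg' (1, 0) (x, t))
    have heq : (fun s => fderiv ℝ f (s, t) (1, 0)) = fun s => ψx s t :=
      funext fun s => (hpsix_eq s t).symm
    rw [heq] at h1
    exact h1
  · intro x t
    have h1 := lineX _ _ x t (hg' (0, 1) (x, t))
    have heq : (fun s => fderiv ℝ f (s, t) (0, 1)) = fun s => ψθ s t :=
      funext fun s => (hpsiθ_eq s t).symm
    rw [heq] at h1
    have : D2 (x, t) (1, 0) (0, 1) = ψxθ x t := by rw [hsymm2, hxθ_eq]
    rwa [show ((ContinuousLinearMap.apply ℝ ℝ ((0:ℝ), (1:ℝ))).comp (D2 (x, t))) (1, 0)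
      = ψxθ x t from this] at h1
  · rw [← hgθ]
    exact (ContinuousLinearMap.apply ℝ ℝ ((0:ℝ), (1:ℝ))).contDiff.comp hf'C1
  · intro p
    refine ⟨(ContinuousLinearMap.apply ℝ ℝ ((1:ℝ), (0:ℝ))).comp (D2 p), ?_, ?_⟩
    · have := hg' (1, 0) p
      rwa [hgx] at this
    · intro a b
      have hab : ((a, b) : ℝ × ℝ) = a • ((1:ℝ), (0:ℝ)) + b • ((0:ℝ), (1:ℝ)) := by
        simp [Prod.ext_iff]
      simp only [ContinuousLinearMap.comp_apply, ContinuousLinearMap.apply_apply, hab,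
        map_add, map_smul, ContinuousLinearMap.add_apply, ContinuousLinearMap.smul_apply,
        smul_eq_mul]
      rw [← hxθ_eq p.1 p.2]
      ring


private lemma Smap_isLinear {N : ℕ} (k : Fin N → Fin N → ℝ) : IsLinearMap ℝ (Smap k) := by
  constructor
  · intro v w
    funext i
    simp only [Smap, Pi.add_apply, ← Finset.sum_add_distrib]
    exact Finset.sum_congr rfl fun j _ => by ring
  · intro r v
    funext i
    simp only [Smap, Pi.smul_apply, smul_eq_mul, Finset.mul_sum]
    exact Finset.sum_congr rfl fun j _ => by ring

private lemma sumsq_eq_zero {N : ℕ} (v : Fin N → ℝ) (h : ∑ i, v i ^ 2 ≤ 0) : v = 0 := by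
  have hzero : ∑ i, v i ^ 2 = 0 :=
    le_antisymm h (Finset.sum_nonneg fun i _ => sq_nonneg _)
  funext i
  have := (Finset.sum_eq_zero_iff_of_nonneg
    (fun i (_ : i ∈ (Finset.univ : Finset (Fin N))) => sq_nonneg (v i))).mp hzero i
    (Finset.mem_univ i)
  have : v i = 0 := by nlinarith [this]
  simpa using this

set_option maxHeartbeats 1000000 in
/-- The Hamiltonian `H(x,p) = (1/2)∑ᵢ Θᵢ(x,p)²` is `C¹` and the trajectories of the
semiclassical Bethe system satisfy Hamilton's equations
`dxᵢ/dt = ∂H/∂pᵢ`, `dpᵢ/dt = −∂H/∂xᵢ`. -/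
theorem stmt12 (N : ℕ) (ε : ℝ) (hε : 0 < ε)
    (ψ ψx ψθ ψxθ : ℝ → ℝ → ℝ)
    (hC2 : ContDiff ℝ 2 (fun q : ℝ × ℝ => ψ q.1 q.2))
    (hψx : ∀ x t, HasDerivAt (fun x' => ψ x' t) (ψx x t) x)
    (hψθ : ∀ x t, HasDerivAt (fun t' => ψ x t') (ψθ x t) t)
    (hψxθ : ∀ x t, HasDerivAt (fun t' => ψx x t') (ψxθ x t) t)
    (hpos : ∀ x t, 0 ≤ ψxθ x t)
    (hsym : ∀ x t, ψ (-x) (-t) = ψ x t)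
    (hrange : ∀ x t, ε ≤ |x| → ψx x t = 0)
    (Θ : (Fin N → ℝ) × (Fin N → ℝ) → Fin N → ℝ)
    (hΘC1 : ContDiff ℝ 1 Θ)
    (hΘ : ∀ (q : (Fin N → ℝ) × (Fin N → ℝ)) (i : Fin N),
      q.2 i = Θ q i + ∑ j ∈ Finset.univ.erase i,
        ψx (q.1 i - q.1 j) (Θ q i - Θ q j))
    (H : (Fin N → ℝ) × (Fin N → ℝ) → ℝ)
    (hH : ∀ q, H q = (1 / 2) * ∑ i, Θ q i ^ 2)
    (y θ : Fin N → ℝ)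
    (xt pt : ℝ → Fin N → ℝ)
    (hxt : ∀ t i, y i + t * θ i
      = xt t i + ∑ j ∈ Finset.univ.erase i, ψθ (xt t i - xt t j) (θ i - θ j))
    (hpt : ∀ t i, pt t i
      = θ i + ∑ j ∈ Finset.univ.erase i, ψx (xt t i - xt t j) (θ i - θ j)) :
    ContDiff ℝ 1 H ∧
    ∀ (t : ℝ) (i : Fin N),
      HasDerivAt (fun s => xt s i)
        (fderiv ℝ H (xt t, pt t) ((0 : Fin N → ℝ), (Pi.single i 1 : Fin N → ℝ))) t ∧
      HasDerivAt (fun s => pt s i)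
        (-(fderiv ℝ H (xt t, pt t) ((Pi.single i 1 : Fin N → ℝ), (0 : Fin N → ℝ)))) t := by
  obtain ⟨ψxx, hψxx, hClair, hθC1j, hψxJ⟩ := psi_package ψ ψx ψθ ψxθ hC2 hψx hψθ hψxθ
  -- odd/even symmetries
  have oddx : ∀ x t, ψx (-x) (-t) = - ψx x t := by
    intro x t
    have h1 := (hψx (-x) (-t)).comp x (hasDerivAt_neg x)
    have h1' : HasDerivAt (fun x' : ℝ => ψ x' t) (ψx (-x) (-t) * (-1)) x := by
      simpa only [Function.comp_def, hsym] using h1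
    have := (hψx x t).unique h1'
    linarith
  have oddθ : ∀ x t, ψθ (-x) (-t) = - ψθ x t := by
    intro x t
    have h1 := (hψθ (-x) (-t)).comp t (hasDerivAt_neg t)
    have h1' : HasDerivAt (fun t' : ℝ => ψ x t') (ψθ (-x) (-t) * (-1)) t := by
      simpa only [Function.comp_def, hsym] using h1
    have := (hψθ x t).unique h1'
    linarith
  have evenxθ : ∀ x t, ψxθ (-x) (-t) = ψxθ x t := by
    intro x t
    have h1 := (hψxθ (-x) (-t)).comp t (hasDerivAt_neg t)
    have h1' : HasDerivAt (fun t' : ℝ => ψx (-x) (-t')) (ψxθ (-x) (-t) * (-1)) t := by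
      simpa only [Function.comp_def] using h1
    have heq : (fun t' : ℝ => ψx (-x) (-t')) = fun t' => -ψx x t' :=
      funext fun s => oddx x s
    rw [heq] at h1'
    have h2 : HasDerivAt (fun t' : ℝ => -ψx x t') (-(ψxθ x t)) t := (hψxθ x t).neg
    have := h2.unique h1'
    linarith
  have evenxx : ∀ x t, ψxx (-x) (-t) = ψxx x t := by
    intro x t
    have h1 := (hψxx (-x) (-t)).comp x (hasDerivAt_neg x)
    have h1' : HasDerivAt (fun x' : ℝ => ψx (-x') (-t)) (ψxx (-x) (-t) * (-1)) x := by
      simpa only [Function.comp_def] using h1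
    have heq : (fun x' : ℝ => ψx (-x') (-t)) = fun x' => -ψx x' t :=
      funext fun s => oddx s t
    rw [heq] at h1'
    have h2 : HasDerivAt (fun x' : ℝ => -ψx x' t) (-(ψxx x t)) x := (hψxx x t).neg
    have := h2.unique h1'
    linarith
  have monox : ∀ x, Monotone (ψx x) := fun x =>
    monotone_of_deriv_nonneg (fun t => (hψxθ x t).differentiableAt)
      (fun t => by rw [(hψxθ x t).deriv]; exact hpos x t)
  have monoθ : ∀ t, Monotone (fun x => ψθ x t) := fun t =>
    monotone_of_deriv_nonneg (fun x => (hClair x t).differentiableAt)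
      (fun x => by rw [(hClair x t).deriv]; exact hpos x t)
  -- Θ on the trajectory equals θ
  have Θtraj : ∀ t, Θ (xt t, pt t) = θ := by
    intro t
    refine uniq_sol ψx (fun a b => oddx a b) monox (xt t) _ θ fun i => ?_
    exact (hΘ (xt t, pt t) i).symm.trans (hpt t i)
  -- H is C¹
  have hHfun : H = fun q => (1 / 2 : ℝ) * ∑ i, Θ q i ^ 2 := funext hH
  have hΘi : ∀ i, ContDiff ℝ 1 (fun q => Θ q i) := fun i => (contDiff_apply ℝ ℝ i).comp hΘC1
  have HC1 : ContDiff ℝ 1 H := by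
    rw [hHfun]
    exact contDiff_const.mul (ContDiff.sum fun i _ => (hΘi i).pow 2)
  refine ⟨HC1, fun t i => ?_⟩
  set x := xt t with hxdef
  set a : Fin N → Fin N → ℝ := fun i j => ψxθ (x i - x j) (θ i - θ j) with ha
  set c : Fin N → Fin N → ℝ := fun i j => ψxx (x i - x j) (θ i - θ j) with hc
  have hasym : ∀ i j, a i j = a j i := by
    intro i j
    simp only [ha]
    rw [show x j - x i = -(x i - x j) by ring, show θ j - θ i = -(θ i - θ j) by ring, evenxθ]
  have hcsym : ∀ i j, c i j = c j i := by
    intro i j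
    simp only [hc]
    rw [show x j - x i = -(x i - x j) by ring, show θ j - θ i = -(θ i - θ j) by ring, evenxx]
  have ha0 : ∀ i j, 0 ≤ a i j := fun i j => hpos _ _
  -- the linearized matrix A as a linear equivalence
  set ALin : (Fin N → ℝ) →ₗ[ℝ] (Fin N → ℝ) :=
    LinearMap.id + IsLinearMap.mk' (Smap a) (Smap_isLinear a) with hALin
  have hALin_apply : ∀ w i, ALin w i = w i + Smap a w i := fun w i => rfl
  have Ainj : Function.Injective ALin := by
    rw [injective_iff_map_eq_zero]
    intro v hv
    have h0 : ∑ k, v k * (v k + Smap a v k) = 0 := by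
      rw [show (fun k => v k * (v k + Smap a v k)) = fun k => v k * ALin v k from rfl] at *
      simp only [hv, Pi.zero_apply, mul_zero, Finset.sum_const_zero]
    have h1 : ∑ k, v k * (v k + Smap a v k) = ∑ k, v k ^ 2 + ∑ k, v k * Smap a v k := by
      rw [← Finset.sum_add_distrib]
      exact Finset.sum_congr rfl fun k _ => by ring
    have h2 := Smap_nonneg a hasym ha0 v
    have h3 : ∑ k, v k ^ 2 ≤ 0 := by linarith
    exact sumsq_eq_zero v h3
  set AEquiv : (Fin N → ℝ) ≃L[ℝ] (Fin N → ℝ) :=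
    (LinearEquiv.ofInjectiveEndo ALin Ainj).toContinuousLinearEquiv with hAEquiv
  have hAEquiv_apply : ∀ w, AEquiv w = ALin w := fun w => rfl
  -- the position map F and its derivative
  set Fm : (Fin N → ℝ) → (Fin N → ℝ) :=
    fun z i => z i + ∑ j ∈ Finset.univ.erase i, ψθ (z i - z j) (θ i - θ j) with hFm
  have hFeq : ∀ s, Fm (xt s) = y + s • θ := by
    intro s
    funext k
    simp only [hFm, Pi.add_apply, Pi.smul_apply, smul_eq_mul]
    exact (hxt s k).symm
  have hFC1 : ContDiff ℝ 1 Fm := by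
    apply contDiff_pi.2
    intro k
    refine (contDiff_apply ℝ ℝ k).add (ContDiff.sum fun j _ => ?_)
    exact hθC1j.comp (ContDiff.prodMk ((contDiff_apply ℝ ℝ k).sub (contDiff_apply ℝ ℝ j)) contDiff_const)
  have hACl : HasFDerivAt Fm (AEquiv : (Fin N → ℝ) →L[ℝ] (Fin N → ℝ)) x := by
    apply hasFDerivAt_pi''
    intro k
    have hCLM : (ContinuousLinearMap.proj k).comp (AEquiv : (Fin N → ℝ) →L[ℝ] (Fin N → ℝ))
        = ContinuousLinearMap.proj k + ∑ j ∈ Finset.univ.erase k,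
          a k j • (ContinuousLinearMap.proj (R := ℝ) (φ := fun _ : Fin N => ℝ) k
            - ContinuousLinearMap.proj j) := by
      ext w
      simp only [ContinuousLinearMap.comp_apply, ContinuousLinearMap.coe_coe,
        ContinuousLinearMap.proj_apply, ContinuousLinearMap.add_apply,
        ContinuousLinearMap.sum_apply, ContinuousLinearMap.smul_apply,
        ContinuousLinearMap.sub_apply, smul_eq_mul]
      rw [show (AEquiv : (Fin N → ℝ) →L[ℝ] (Fin N → ℝ)) w k = w k + Smap a w k from rfl]
      simp only [Smap]
    rw [hCLM]
    refine (hasFDerivAt_apply k x).add ?_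
    apply HasFDerivAt.fun_sum
    intro j hj
    have hin : HasFDerivAt (fun z : Fin N → ℝ => z k - z j)
        (ContinuousLinearMap.proj (R := ℝ) (φ := fun _ : Fin N => ℝ) k
          - ContinuousLinearMap.proj j) x := (hasFDerivAt_apply k x).sub (hasFDerivAt_apply j x)
    have hout := hClair (x k - x j) (θ k - θ j)
    have := hout.comp_hasFDerivAt x hin
    simpa only [Function.comp_def] using this
  have hstrict : HasStrictFDerivAt Fm (AEquiv : (Fin N → ℝ) →L[ℝ] (Fin N → ℝ)) x :=
    hFC1.contDiffAt.hasStrictFDerivAt' hACl (by norm_num)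
  set g : (Fin N → ℝ) → (Fin N → ℝ) := hstrict.localInverse Fm AEquiv x with hg
  set u : Fin N → ℝ := AEquiv.symm θ with hu
  have hAu : ∀ k, u k + Smap a u k = θ k := fun k =>
    congrFun (AEquiv.apply_symm_apply θ) k
  -- derivative of the trajectory via the inverse function theorem
  have hline : HasDerivAt (fun s : ℝ => y + s • θ) θ t := by
    simpa using ((hasDerivAt_id t).smul_const θ).const_add y
  have hg' : HasFDerivAt g ((AEquiv.symm : (Fin N → ℝ) →L[ℝ] (Fin N → ℝ))) (y + t • θ) := by
    rw [← hFeq t, ← hxdef]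
    exact hstrict.to_localInverse.hasFDerivAt
  have hcurve : HasDerivAt (fun s => g (y + s • θ)) u t := by
    have := hg'.comp_hasDerivAt t hline
    exact this
  have hev1 : ∀ᶠ s in nhds t, Fm (g (y + s • θ)) = y + s • θ := by
    have hcont : Filter.Tendsto (fun s : ℝ => y + s • θ) (nhds t) (nhds (y + t • θ)) :=
      hline.continuousAt
    have hri := hstrict.eventually_right_inverse
    rw [show Fm x = y + t • θ from (hxdef ▸ hFeq t)] at hri
    exact hcont.eventually hri
  have hev : (fun s => xt s) =ᶠ[nhds t] fun s => g (y + s • θ) := by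
    filter_upwards [hev1] with s hs
    refine uniq_sol (fun p q => ψθ q p) (fun p q => oddθ q p) (fun p => ?_) θ
      (xt s) (g (y + s • θ)) fun k => ?_
    · intro q q' hqq'
      exact monoθ p hqq'
    · have h1 : Fm (xt s) k = Fm (g (y + s • θ)) k := by rw [hFeq s, hs]
      simpa only [hFm] using h1
  have hxtd : HasDerivAt (fun s => xt s) u t := hcurve.congr_of_eventuallyEq hev
  have hxd : ∀ k, HasDerivAt (fun s => xt s k) (u k) t := by
    intro k
    have := (ContinuousLinearMap.proj (R := ℝ) (φ := fun _ : Fin N => ℝ) k).hasFDerivAt.comp_hasDerivAt t hxtd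
    simpa only [Function.comp_def, ContinuousLinearMap.proj_apply] using this
  -- derivative of the momentum
  have hCu : HasDerivAt (fun s => pt s i) (Smap c u i) t := by
    have hfun : (fun s => pt s i) = fun s => θ i +
        ∑ j ∈ Finset.univ.erase i, ψx (xt s i - xt s j) (θ i - θ j) := funext fun s => hpt s i
    rw [hfun]
    have hsum : HasDerivAt (fun s => ∑ j ∈ Finset.univ.erase i, ψx (xt s i - xt s j) (θ i - θ j))
        (∑ j ∈ Finset.univ.erase i, c i j * (u i - u j)) t := by
      apply HasDerivAt.fun_sum
      intro j hj
      have hin : HasDerivAt (fun s => xt s i - xt s j) (u i - u j) t := (hxd i).sub (hxd j)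
      have hout := hψxx (x i - x j) (θ i - θ j)
      have := hout.comp t hin
      simpa only [Function.comp_def, hc, mul_comm] using this
    simpa only [Smap] using hsum.const_add (θ i)
  -- derivative of Θ and of H at the trajectory point
  choose Lmap hLmap hLab using hψxJ
  have hΘq0 : Θ (x, pt t) = θ := Θtraj t
  set T := fderiv ℝ Θ (x, pt t) with hTdef
  have hTd : HasFDerivAt Θ T (x, pt t) := (hΘC1.differentiable (by norm_num) _).hasFDerivAt
  have hTk : ∀ k, HasFDerivAt (fun q : (Fin N → ℝ) × (Fin N → ℝ) => Θ q k)
      ((ContinuousLinearMap.proj k).comp T) (x, pt t) := fun k =>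
    (ContinuousLinearMap.proj (R := ℝ) (φ := fun _ : Fin N => ℝ) k).hasFDerivAt.comp _ hTd
  set M : ((Fin N → ℝ) × (Fin N → ℝ)) →L[ℝ] ℝ :=
    (1 / 2 : ℝ) • ∑ k, (Θ (x, pt t) k • ((ContinuousLinearMap.proj k).comp T)
      + Θ (x, pt t) k • ((ContinuousLinearMap.proj k).comp T)) with hM
  have hHd : HasFDerivAt H M (x, pt t) := by
    have h1 : ∀ k, HasFDerivAt (fun q : (Fin N → ℝ) × (Fin N → ℝ) => Θ q k * Θ q k)
        (Θ (x, pt t) k • ((ContinuousLinearMap.proj k).comp T)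
          + Θ (x, pt t) k • ((ContinuousLinearMap.proj k).comp T)) (x, pt t) :=
      fun k => (hTk k).mul (hTk k)
    have h2 : HasFDerivAt (fun q : (Fin N → ℝ) × (Fin N → ℝ) =>
        (1 / 2 : ℝ) * ∑ k, Θ q k * Θ q k) M (x, pt t) :=
      (HasFDerivAt.fun_sum fun k _ => h1 k).const_mul _
    have h3 : H = fun q : (Fin N → ℝ) × (Fin N → ℝ) => (1 / 2 : ℝ) * ∑ k, Θ q k * Θ q k := by
      funext q
      rw [hH q]
      congr 1
      exact Finset.sum_congr rfl fun k _ => sq (Θ q k) ▸ (sq (Θ q k)).symm ▸ (pow_two (Θ q k))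
    rw [h3]
    exact h2
  have hMv : ∀ v : (Fin N → ℝ) × (Fin N → ℝ), M v = ∑ k, θ k * T v k := by
    intro v
    simp only [hM, ContinuousLinearMap.smul_apply, ContinuousLinearMap.sum_apply,
      ContinuousLinearMap.add_apply, ContinuousLinearMap.comp_apply,
      ContinuousLinearMap.proj_apply, smul_eq_mul, hΘq0]
    rw [Finset.mul_sum]
    exact Finset.sum_congr rfl fun k _ => by ring
  -- implicit differentiation of the Bethe equations for Θ
  have hrel : ∀ (v : (Fin N → ℝ) × (Fin N → ℝ)) (k : Fin N),
      T v k + (∑ j ∈ Finset.univ.erase k,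
        (c k j * (v.1 k - v.1 j) + a k j * (T v k - T v j))) = v.2 k := by
    intro v k
    set D : ((Fin N → ℝ) × (Fin N → ℝ)) →L[ℝ] ℝ :=
      (ContinuousLinearMap.proj k).comp T + ∑ j ∈ Finset.univ.erase k,
        (Lmap (x k - x j, θ k - θ j)).comp
          (((((ContinuousLinearMap.proj k).comp (ContinuousLinearMap.fst ℝ (Fin N → ℝ) (Fin N → ℝ)))
            - ((ContinuousLinearMap.proj j).comp (ContinuousLinearMap.fst ℝ (Fin N → ℝ) (Fin N → ℝ))))).prod
           (((ContinuousLinearMap.proj k).comp T) - ((ContinuousLinearMap.proj j).comp T))) with hD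
    have hfst : ∀ m : Fin N, HasFDerivAt (fun q : (Fin N → ℝ) × (Fin N → ℝ) => q.1 m)
        ((ContinuousLinearMap.proj m).comp
          (ContinuousLinearMap.fst ℝ (Fin N → ℝ) (Fin N → ℝ))) (x, pt t) := fun m =>
      (ContinuousLinearMap.proj (R := ℝ) (φ := fun _ : Fin N => ℝ) m).hasFDerivAt.comp _
        hasFDerivAt_fst
    have hD1 : HasFDerivAt (fun q : (Fin N → ℝ) × (Fin N → ℝ) =>
        Θ q k + ∑ j ∈ Finset.univ.erase k, ψx (q.1 k - q.1 j) (Θ q k - Θ q j)) D (x, pt t) := by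
      refine (hTk k).add ?_
      apply HasFDerivAt.fun_sum
      intro j hj
      have hin : HasFDerivAt (fun q : (Fin N → ℝ) × (Fin N → ℝ) =>
          (q.1 k - q.1 j, Θ q k - Θ q j))
          (((((ContinuousLinearMap.proj k).comp (ContinuousLinearMap.fst ℝ (Fin N → ℝ) (Fin N → ℝ)))
            - ((ContinuousLinearMap.proj j).comp (ContinuousLinearMap.fst ℝ (Fin N → ℝ) (Fin N → ℝ))))).prod
           (((ContinuousLinearMap.proj k).comp T) - ((ContinuousLinearMap.proj j).comp T)))
          (x, pt t) := ((hfst k).sub (hfst j)).prodMk ((hTk k).sub (hTk j))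
      have hout : HasFDerivAt (fun r : ℝ × ℝ => ψx r.1 r.2) (Lmap (x k - x j, θ k - θ j))
          ((fun q : (Fin N → ℝ) × (Fin N → ℝ) => (q.1 k - q.1 j, Θ q k - Θ q j)) (x, pt t)) := by
        have hpoint : ((fun q : (Fin N → ℝ) × (Fin N → ℝ) =>
            (q.1 k - q.1 j, Θ q k - Θ q j)) (x, pt t)) = (x k - x j, θ k - θ j) := by
          simp [hΘq0]
        rw [hpoint]
        exact hLmap _
      have := hout.comp (x, pt t) hin
      simpa only [Function.comp_def] using this
    have hD2 : HasFDerivAt (fun q : (Fin N → ℝ) × (Fin N → ℝ) => q.2 k)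
        ((ContinuousLinearMap.proj k).comp
          (ContinuousLinearMap.snd ℝ (Fin N → ℝ) (Fin N → ℝ))) (x, pt t) :=
      (ContinuousLinearMap.proj (R := ℝ) (φ := fun _ : Fin N => ℝ) k).hasFDerivAt.comp _
        hasFDerivAt_snd
    have hfunid : (fun q : (Fin N → ℝ) × (Fin N → ℝ) => q.2 k)
        = fun q => Θ q k + ∑ j ∈ Finset.univ.erase k, ψx (q.1 k - q.1 j) (Θ q k - Θ q j) :=
      funext fun q => hΘ q k
    rw [hfunid] at hD2
    have hDeq : D = (ContinuousLinearMap.proj k).comp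
        (ContinuousLinearMap.snd ℝ (Fin N → ℝ) (Fin N → ℝ)) := hD1.unique hD2
    have happ := congrArg (fun (L : ((Fin N → ℝ) × (Fin N → ℝ)) →L[ℝ] ℝ) => L v) hDeq
    simp only [hD, ContinuousLinearMap.add_apply, ContinuousLinearMap.comp_apply,
      ContinuousLinearMap.sum_apply, ContinuousLinearMap.prod_apply,
      ContinuousLinearMap.sub_apply, ContinuousLinearMap.coe_fst', ContinuousLinearMap.coe_snd',
      ContinuousLinearMap.proj_apply] at happ
    rw [← happ]
    congr 1
    refine Finset.sum_congr rfl fun j _ => ?_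
    rw [hLab (x k - x j, θ k - θ j) (v.1 k - v.1 j) (T v k - T v j)]
  -- assembly
  constructor
  · have hval : fderiv ℝ H (x, pt t)
        ((0 : Fin N → ℝ), (Pi.single i 1 : Fin N → ℝ)) = u i := by
      rw [hHd.fderiv, hMv]
      set v : (Fin N → ℝ) × (Fin N → ℝ) :=
        ((0 : Fin N → ℝ), (Pi.single i 1 : Fin N → ℝ)) with hv
      have hAW : ∀ k, T v k + Smap a (fun m => T v m) k = (Pi.single i 1 : Fin N → ℝ) k := by
        intro k
        have h := hrel v k
        have hsum_eq : (∑ j ∈ Finset.univ.erase k,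
            (c k j * (v.1 k - v.1 j) + a k j * (T v k - T v j)))
            = Smap a (fun m => T v m) k := by
          simp only [Smap]
          refine Finset.sum_congr rfl fun j _ => ?_
          have h1 : v.1 k - v.1 j = 0 := by simp [hv]
          rw [h1]
          ring
        rw [hsum_eq] at h
        exact h
      have expand1 : ∑ k, θ k * T v k
          = ∑ k, u k * T v k + ∑ k, (fun m => T v m) k * Smap a u k := by
        rw [← Finset.sum_add_distrib]
        refine Finset.sum_congr rfl fun k _ => ?_
        rw [← hAu k]
        ring
      have e2 := Smap_symm a hasym (fun m => T v m) u
      have expand2 : ∑ k, u k * T v k + ∑ k, u k * Smap a (fun m => T v m) k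
          = ∑ k, u k * (Pi.single i 1 : Fin N → ℝ) k := by
        rw [← Finset.sum_add_distrib]
        refine Finset.sum_congr rfl fun k _ => ?_
        rw [← hAW k]
        ring
      have e4 : ∑ k, u k * (Pi.single i 1 : Fin N → ℝ) k = u i := by
        simp [Pi.single_apply, mul_ite, mul_one, mul_zero, Finset.sum_ite_eq', Finset.mem_univ]
      linarith [expand1, e2, expand2, e4]
    rw [hval]
    exact hxd i
  · have hval : fderiv ℝ H (x, pt t)
        ((Pi.single i 1 : Fin N → ℝ), (0 : Fin N → ℝ)) = - Smap c u i := by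
      rw [hHd.fderiv, hMv]
      set v : (Fin N → ℝ) × (Fin N → ℝ) :=
        ((Pi.single i 1 : Fin N → ℝ), (0 : Fin N → ℝ)) with hv
      have hAW : ∀ k, T v k + Smap a (fun m => T v m) k
          = - Smap c ((Pi.single i 1 : Fin N → ℝ)) k := by
        intro k
        have h := hrel v k
        have hsum_eq : (∑ j ∈ Finset.univ.erase k,
            (c k j * (v.1 k - v.1 j) + a k j * (T v k - T v j)))
            = Smap c ((Pi.single i 1 : Fin N → ℝ)) k + Smap a (fun m => T v m) k := by
          simp only [Smap, ← Finset.sum_add_distrib]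
          try refine Finset.sum_congr rfl fun j _ => ?_
          try simp [hv]
        rw [hsum_eq] at h
        have h2 : v.2 k = 0 := by simp [hv]
        rw [h2] at h
        linarith
      have expand1 : ∑ k, θ k * T v k
          = ∑ k, u k * T v k + ∑ k, (fun m => T v m) k * Smap a u k := by
        rw [← Finset.sum_add_distrib]
        refine Finset.sum_congr rfl fun k _ => ?_
        rw [← hAu k]
        ring
      have e2 := Smap_symm a hasym (fun m => T v m) u
      have expand2 : ∑ k, u k * T v k + ∑ k, u k * Smap a (fun m => T v m) k
          = ∑ k, u k * (- Smap c ((Pi.single i 1 : Fin N → ℝ)) k) := by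
        rw [← Finset.sum_add_distrib]
        refine Finset.sum_congr rfl fun k _ => ?_
        rw [← hAW k]
        ring
      have e3 : ∑ k, u k * (- Smap c ((Pi.single i 1 : Fin N → ℝ)) k)
          = - ∑ k, (Pi.single i 1 : Fin N → ℝ) k * Smap c u k := by
        have hsy := Smap_symm c hcsym u ((Pi.single i 1 : Fin N → ℝ))
        have hneg : ∑ k, u k * (- Smap c ((Pi.single i 1 : Fin N → ℝ)) k)
            = - ∑ k, u k * Smap c ((Pi.single i 1 : Fin N → ℝ)) k := by
          rw [← Finset.sum_neg_distrib]
          exact Finset.sum_congr rfl fun k _ => by ring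
        rw [hneg, hsy]
      have e4 : ∑ k, (Pi.single i 1 : Fin N → ℝ) k * Smap c u k = Smap c u i := by
        simp [Pi.single_apply, ite_mul, one_mul, zero_mul, Finset.sum_ite_eq, Finset.mem_univ]
      linarith [expand1, e2, expand2, e3, e4]
    rw [hval, neg_neg]
    exact hCu
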